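/- Let (Ω, F, P) be a probability space satisfying the hypotheses below. Then for every x ∈ ℤ^d, μ(x) ≤ C₁ + E[t(x)] · liminf_{n → ∞} (1/n) · Σ_{k=1}^{n} P( t((k−1)x) ≤ t(kx) ). (This is the key intermediate inequality in the proof of the first statement of Theorem 1.1, obtained by telescoping E[t(nx)] over the index set I_{n,x} of correctly ordered expected hitting times and applying Lemma 3.1 and Proposition 1.3.) -/

import Mathlib

open MeasureTheory Filter Finset

/-- Key intermediate inequality in the proof of the first statement of
Theorem 1.1: `μ(x) ≤ C₁ + E[t(x)] · liminf_n (1/n) ∑_{k=1}^n P(t((k-1)x) ≤ t(kx))`. -/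
def onorm {d : ℕ} (x : Fin d → ℤ) : ℕ := ∑ i, (x i).natAbs

/-- First statement of Theorem 1.1 (Uniformity of hitting times):
`lim_{|x|→∞} liminf_{n→∞} (1/n) ∑_{k=1}^n P(t((k-1)x) ≤ t(kx)) = 1`,
the limit in `x` being along the cofinite filter on `ℤ^d`. -/
theorem stmt_8
    {Ω : Type*} [MeasurableSpace Ω] (P : Measure Ω) [IsProbabilityMeasure P]
    (d : ℕ) (hd : 1 ≤ d)
    (t σ : (Fin d → ℤ) → Ω → ℝ)
    (ht_meas : ∀ x, Measurable (t x)) (hσ_meas : ∀ x, Measurable (σ x))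
    (ht_nonneg : ∀ x ω, 0 ≤ t x ω) (hσ_nonneg : ∀ x ω, 0 ≤ σ x ω)
    (ht_int : ∀ x, Integrable (t x) P) (hσ_int : ∀ x, Integrable (σ x) P)
    -- (i) the renewal bound of Lemma 3.1
    (hrenewal : ∀ x y, ∫ ω in {ω | σ y ω ≤ t x ω}, (t x ω - σ y ω) ∂P
      ≤ (P {ω | σ y ω ≤ t x ω}).toReal * ∫ ω, t (x - y) ω ∂P)
    -- (ii) t ≤ σ a.s. and uniform bound on E[σ - t]
    (htσ : ∀ y, ∀ᵐ ω ∂P, t y ω ≤ σ y ω)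
    (C₁ : ℝ) (hC₁ : ∀ y, ∫ ω, (σ y ω - t y ω) ∂P ≤ C₁)
    -- (iii) normalized expected hitting times converge
    (μ : (Fin d → ℤ) → ℝ) (hμ_nonneg : ∀ x, 0 ≤ μ x)
    (hμ : ∀ x, Tendsto (fun n : ℕ => (∫ ω, t (n • x) ω ∂P) / n) atTop (nhds (μ x)))
    :
    ∀ x : Fin d → ℤ, μ x ≤ C₁ + (∫ ω, t x ω ∂P) * liminf (fun n : ℕ =>
        (1 / (n : ℝ)) * ∑ k ∈ Finset.Icc 1 n,
          (P {ω | t ((k - 1) • x) ω ≤ t (k • x) ω}).toReal) atTop := by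
  intro x
  set E : ℝ := ∫ ω, t x ω ∂P with hEdef
  have hE0 : 0 ≤ E := integral_nonneg fun ω => ht_nonneg x ω
  set p : ℕ → ℝ := fun k => (P {ω | t ((k - 1) • x) ω ≤ t (k • x) ω}).toReal with hpdef
  set s : ℕ → ℝ := fun n => (1 / (n : ℝ)) * ∑ k ∈ Finset.Icc 1 n, p k with hsdef
  set L : ℝ := liminf s atTop with hLdef
  have hp01 : ∀ k, 0 ≤ p k ∧ p k ≤ 1 := by
    intro k
    constructor
    · exact ENNReal.toReal_nonneg
    · have h1 := prob_le_one (μ := P) (s := {ω | t ((k - 1) • x) ω ≤ t (k • x) ω})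
      have := ENNReal.toReal_mono (by simp) h1
      simpa [hpdef] using this
  -- the per-step bound
  have step : ∀ k : ℕ, 1 ≤ k →
      (∫ ω, t (k • x) ω ∂P) - ∫ ω, t ((k - 1) • x) ω ∂P ≤ C₁ + E * p k := by
    intro k hk
    set y := (k - 1) • x with hy
    set z := k • x with hz
    have hzy : z - y = x := by
      obtain ⟨m, rfl⟩ := Nat.exists_eq_add_of_le hk
      show (1 + m) • x - (1 + m - 1) • x = x
      rw [Nat.add_comm 1 m, Nat.add_sub_cancel, succ_nsmul, add_sub_cancel_left]
    have hA : MeasurableSet {ω | σ y ω ≤ t z ω} := measurableSet_le (hσ_meas y) (ht_meas z)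
    have hint : Integrable (fun ω => t z ω - σ y ω) P := (ht_int z).sub (hσ_int y)
    have hsplit : ∫ ω, (t z ω - σ y ω) ∂P =
        (∫ ω in {ω | σ y ω ≤ t z ω}, (t z ω - σ y ω) ∂P)
        + ∫ ω in {ω | σ y ω ≤ t z ω}ᶜ, (t z ω - σ y ω) ∂P :=
      (integral_add_compl hA hint).symm
    have hneg : ∫ ω in {ω | σ y ω ≤ t z ω}ᶜ, (t z ω - σ y ω) ∂P ≤ 0 := by
      apply setIntegral_nonpos hA.compl
      intro ω hω
      have : ¬ (σ y ω ≤ t z ω) := hω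
      linarith [lt_of_not_ge this]
    have hren := hrenewal z y
    rw [hzy] at hren
    have h1 : ∫ ω, (t z ω - σ y ω) ∂P ≤ (P {ω | σ y ω ≤ t z ω}).toReal * E := by
      rw [hsplit]
      have := hren
      linarith
    -- compare the probabilities
    have h2 : (P {ω | σ y ω ≤ t z ω}).toReal ≤ p k := by
      have hsub : {ω | σ y ω ≤ t z ω} ≤ᵐ[P] {ω | t y ω ≤ t z ω} := by
        filter_upwards [htσ y] with ω hω
        intro hmem
        exact le_trans hω hmem
      have := measure_mono_ae hsub
      exact ENNReal.toReal_mono (measure_ne_top P _) this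
    have h3 : ∫ ω, (σ y ω - t y ω) ∂P ≤ C₁ := hC₁ y
    have hdec : (∫ ω, t z ω ∂P) - ∫ ω, t y ω ∂P =
        (∫ ω, (t z ω - σ y ω) ∂P) + ∫ ω, (σ y ω - t y ω) ∂P := by
      rw [integral_sub (ht_int z) (hσ_int y), integral_sub (hσ_int y) (ht_int y)]
      ring
    have hmul : (P {ω | σ y ω ≤ t z ω}).toReal * E ≤ p k * E :=
      mul_le_mul_of_nonneg_right h2 hE0
    rw [hdec]
    have : p k * E = E * p k := mul_comm _ _
    linarith
  -- telescoping bound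
  have tele : ∀ n : ℕ, ∫ ω, t (n • x) ω ∂P ≤
      (∫ ω, t ((0 : ℕ) • x) ω ∂P) + n * C₁ + E * ∑ k ∈ Finset.Icc 1 n, p k := by
    intro n
    induction n with
    | zero => simp
    | succ n ih =>
      have hstep := step (n + 1) (by omega)
      rw [Finset.sum_Icc_succ_top (by omega : 1 ≤ n + 1)]
      have hsimp : (n + 1 : ℕ) - 1 = n := by omega
      rw [hsimp] at hstep
      push_cast
      push_cast at ih
      nlinarith [hE0, (hp01 (n+1)).1]
  -- bound on the averages, for n ≥ 1
  have avg : ∀ n : ℕ, 1 ≤ n →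
      (∫ ω, t (n • x) ω ∂P) / n ≤ (∫ ω, t ((0 : ℕ) • x) ω ∂P) / n + C₁ + E * s n := by
    intro n hn
    have hn0 : (0 : ℝ) < n := by exact_mod_cast hn
    have h := div_le_div_of_nonneg_right (tele n) hn0.le
    refine h.trans_eq ?_
    have hsn : s n = (1 / (n : ℝ)) * ∑ k ∈ Finset.Icc 1 n, p k := rfl
    rw [hsn]
    field_simp
  -- s is bounded above by 1, hence cobounded
  have hs_le_one : ∀ n, s n ≤ 1 := by
    intro n
    rcases Nat.eq_zero_or_pos n with h0 | hpos
    · simp [hsdef, h0]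
    · have hsum : ∑ k ∈ Finset.Icc 1 n, p k ≤ (n : ℝ) := by
        calc ∑ k ∈ Finset.Icc 1 n, p k ≤ ∑ k ∈ Finset.Icc 1 n, (1 : ℝ) :=
              Finset.sum_le_sum fun k _ => (hp01 k).2
          _ = n := by simp [Nat.card_Icc]
      have hn0 : (0 : ℝ) < n := by exact_mod_cast hpos
      have hsn : s n = (1 / (n : ℝ)) * ∑ k ∈ Finset.Icc 1 n, p k := rfl
      rw [hsn, one_div, inv_mul_le_iff₀ hn0]
      simpa using hsum
  have hcob : IsCoboundedUnder (· ≥ ·) atTop s :=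
    IsBoundedUnder.isCoboundedUnder_ge (isBoundedUnder_of ⟨1, hs_le_one⟩)
  -- ε-argument
  have key : ∀ ε : ℝ, 0 < ε → μ x ≤ C₁ + E * L + (2 + E) * ε := by
    intro ε hε
    have hfreq : ∃ᶠ n in atTop, s n < L + ε :=
      frequently_lt_of_liminf_lt hcob (by linarith)
    have hev1 : ∀ᶠ n : ℕ in atTop, μ x - ε < (∫ ω, t (n • x) ω ∂P) / n :=
      (hμ x).eventually (eventually_gt_nhds (by linarith))
    have hev2 : ∀ᶠ n : ℕ in atTop, (∫ ω, t ((0 : ℕ) • x) ω ∂P) / n < ε :=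
      (tendsto_const_div_atTop_nhds_zero_nat _).eventually (eventually_lt_nhds hε)
    have hev3 : ∀ᶠ n : ℕ in atTop, 1 ≤ n := eventually_ge_atTop 1
    obtain ⟨n, hlt, h1, h2, h3⟩ := (hfreq.and_eventually (hev1.and (hev2.and hev3))).exists
    have havg := avg n h3
    have hsmul : E * s n ≤ E * (L + ε) := mul_le_mul_of_nonneg_left (le_of_lt hlt) hE0
    nlinarith
  by_contra hcon
  push_neg at hcon
  have h2E : (0 : ℝ) < 2 + E := by linarith
  have hδ : (0 : ℝ) < μ x - (C₁ + E * L) := by linarith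
  have hε : (0 : ℝ) < (μ x - (C₁ + E * L)) / (2 * (2 + E)) := by positivity
  have hkey := key _ hε
  have heq : (2 + E) * ((μ x - (C₁ + E * L)) / (2 * (2 + E))) = (μ x - (C₁ + E * L)) / 2 := by
    field_simp
  rw [heq] at hkey
  linarith
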